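/- Signed multiplicity-free expansion of a monomial into back stable slides: for every C ∈ 𝒫_m, x_{C_1}⋯x_{C_m} = Σ_{D ∈ 𝔹_C} (−1)^{|S_C(D)|} · 𝔉⃖(D), an identity of formal power series in the variables (x_i)_{i∈ℤ} (the set 𝔹_C is finite, so the sum is finite). -/

import Mathlib

/-- The back stable slide `𝔉⃖(C)` of a weakly decreasing integer sequence `C`:
the formal power series `∑_{D ≤_m C} x_{D₁}⋯x_{D_m}`, the sum over all weakly
decreasing `D` with `D_i ≤ C_i` for all `i` and `D_i > D_{i+1}` whenever
`C_i > C_{i+1}`, given coefficientwise. -/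
noncomputable def backSlideSeq {m : ℕ} (C : Fin m → ℤ) : MvPowerSeries ℤ ℚ :=
  fun mm => (Nat.card {D : Fin m → ℤ // Antitone D ∧
    (∀ i, D i ≤ C i) ∧
    (∀ i j : Fin m, (j : ℕ) = (i : ℕ) + 1 → C j < C i → D j < D i) ∧
    (∑ i, Finsupp.single (D i) 1) = mm} : ℚ)

/-- Position `i` is the start of a block of `C` (i.e. `i = 0` or `C_{i-1} > C_i`). -/
def IsStart {m : ℕ} (C : Fin m → ℤ) (i : Fin m) : Prop :=
  (i : ℕ) = 0 ∨ ∃ h : Fin m, (i : ℕ) = (h : ℕ) + 1 ∧ C i < C h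

/-- Membership `D ∈ 𝔹_C`: writing `C = M₁^{m₁}⋯M_t^{m_t}` (blocks of equal entries),
`D` is a concatenation of words `X^i ∈ B_i` where each `X^i = x₁⋯x_{m_i}` satisfies
`x_{j+1} ∈ {x_j, x_j − 1}` starting from `x₀ = M_i`, and ends with `x_{m_i} > M_{i+1}`.
Equivalently: at each block start `D_i ∈ {C_i, C_i − 1}`; inside a block
`D_{i+1} ∈ {D_i, D_i − 1}`; and at each block end (followed by a strictly smaller
block value `C_{i+1}`) one has `D_i > C_{i+1}`. -/
def InBC {m : ℕ} (C D : Fin m → ℤ) : Prop :=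
  (∀ i : Fin m, IsStart C i → (D i = C i ∨ D i = C i - 1)) ∧
  (∀ i j : Fin m, (j : ℕ) = (i : ℕ) + 1 → C i = C j → (D j = D i ∨ D j = D i - 1)) ∧
  (∀ i j : Fin m, (j : ℕ) = (i : ℕ) + 1 → C j < C i → C j < D i)

/-- The set `S_C(D)` of positions at which the word `D ∈ 𝔹_C` takes a downward step
(`x_{j+1} = x_j − 1`) relative to its reference (`C_i` at a block start, the previous
entry of `D` inside a block). -/
def SCD {m : ℕ} (C D : Fin m → ℤ) : Set (Fin m) :=
  {i | (IsStart C i ∧ D i = C i - 1) ∨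
       ∃ h : Fin m, (i : ℕ) = (h : ℕ) + 1 ∧ C h = C i ∧ D i = D h - 1}

/- ## Auxiliary definitions -/

/-- slide order: `E ≤ D`. -/
def leS {m : ℕ} (E D : Fin m → ℤ) : Prop :=
  (∀ i, E i ≤ D i) ∧ ∀ i j : Fin m, (j : ℕ) = (i : ℕ) + 1 → D j < D i → E j < E i

open Classical in
noncomputable def signfun {m : ℕ} (C D : Fin m → ℤ) : ℚ :=
  ∏ i : Fin m, (if i ∈ SCD C D then (-1 : ℚ) else 1)

open Classical in
noncomputable def wt {m : ℕ} (C E D : Fin m → ℤ) : ℚ :=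
  if InBC C D ∧ leS E D then signfun C D else 0

/- ## basic lemmas -/

lemma antitone_of_adjacent {m : ℕ} {f : Fin m → ℤ}
    (h : ∀ i j : Fin m, (j : ℕ) = (i : ℕ) + 1 → f j ≤ f i) : Antitone f := by
  have key : ∀ d : ℕ, ∀ i j : Fin m, (j : ℕ) = (i : ℕ) + d → f j ≤ f i := by
    intro d
    induction d with
    | zero =>
      intro i j hij
      have : i = j := Fin.ext (by omega)
      rw [this]
    | succ d ih =>
      intro i j hij
      have hk : (i : ℕ) + d < m := by have := j.isLt; omega
      exact (h ⟨(i : ℕ) + d, hk⟩ j (by simp only [Fin.val_mk]; omega)).trans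
        (ih i ⟨(i : ℕ) + d, hk⟩ (by simp only [Fin.val_mk]))
  intro i j hij
  exact key ((j : ℕ) - (i : ℕ)) i j (by omega)

lemma inBC_le {m : ℕ} {C D : Fin m → ℤ} (hC : Antitone C) (h : InBC C D) :
    ∀ i, D i ≤ C i := by
  have key : ∀ v : ℕ, ∀ i : Fin m, (i : ℕ) = v → D i ≤ C i := by
    intro v
    induction v with
    | zero =>
      intro i hi
      rcases h.1 i (Or.inl hi) with h' | h' <;> omega
    | succ v ih =>
      intro i hi
      have hvm : v < m := by have := i.isLt; omega
      obtain ⟨p, hp⟩ : ∃ p : Fin m, (p : ℕ) = v := ⟨⟨v, hvm⟩, rfl⟩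
      have hpi : (i : ℕ) = (p : ℕ) + 1 := by omega
      have hle : C i ≤ C p := hC (by rw [Fin.le_def]; omega)
      rcases lt_or_eq_of_le hle with hlt | heq
      · rcases h.1 i (Or.inr ⟨p, hpi, hlt⟩) with h' | h' <;> omega
      · have := ih p hp
        rcases h.2.1 p i hpi heq.symm with h' | h' <;> omega
  intro i; exact key i i rfl

lemma inBC_lower {m : ℕ} {C D : Fin m → ℤ} (hC : Antitone C) (h : InBC C D) :
    ∀ i, C i - ((i : ℕ) + 1) ≤ D i := by
  have key : ∀ v : ℕ, ∀ i : Fin m, (i : ℕ) = v → C i - ((i : ℕ) + 1) ≤ D i := by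
    intro v
    induction v with
    | zero =>
      intro i hi
      rcases h.1 i (Or.inl hi) with h' | h' <;> omega
    | succ v ih =>
      intro i hi
      have hvm : v < m := by have := i.isLt; omega
      obtain ⟨p, hp⟩ : ∃ p : Fin m, (p : ℕ) = v := ⟨⟨v, hvm⟩, rfl⟩
      have hpi : (i : ℕ) = (p : ℕ) + 1 := by omega
      have hle : C i ≤ C p := hC (by rw [Fin.le_def]; omega)
      rcases lt_or_eq_of_le hle with hlt | heq
      · rcases h.1 i (Or.inr ⟨p, hpi, hlt⟩) with h' | h' <;> omega
      · have := ih p hp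
        rcases h.2.1 p i hpi heq.symm with h' | h' <;> omega
  intro i; exact key i i rfl

lemma inBC_antitone {m : ℕ} {C D : Fin m → ℤ} (hC : Antitone C) (h : InBC C D) :
    Antitone D := by
  apply antitone_of_adjacent
  intro i j hij
  have hle : C j ≤ C i := hC (by rw [Fin.le_def]; omega)
  rcases lt_or_eq_of_le hle with hlt | heq
  · have h1 := h.2.2 i j hij hlt
    have h2 := inBC_le hC h j
    omega
  · rcases h.2.1 i j hij heq.symm with h' | h' <;> omega

lemma wt_ne_zero {m : ℕ} {C E D : Fin m → ℤ} (h : wt C E D ≠ 0) :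
    InBC C D ∧ leS E D := by
  by_contra hc
  exact h (by rw [wt, if_neg hc])

lemma signfun_ne_zero {m : ℕ} (C D : Fin m → ℤ) : signfun C D ≠ 0 := by
  rw [signfun]
  apply Finset.prod_ne_zero_iff.mpr
  intro i _
  split <;> norm_num

lemma sum_wt_indep {m : ℕ} (C E : Fin m → ℤ) (s₁ s₂ : Finset (Fin m → ℤ))
    (h : ∀ D, wt C E D ≠ 0 → D ∈ s₁ ∧ D ∈ s₂) :
    ∑ D ∈ s₁, wt C E D = ∑ D ∈ s₂, wt C E D := by
  have h1 : ∑ D ∈ s₁ ∩ s₂, wt C E D = ∑ D ∈ s₁, wt C E D :=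
    Finset.sum_subset Finset.inter_subset_left (fun x hx hnx => by
      by_contra hne
      exact hnx (Finset.mem_inter.mpr ⟨hx, (h x hne).2⟩))
  have h2 : ∑ D ∈ s₁ ∩ s₂, wt C E D = ∑ D ∈ s₂, wt C E D :=
    Finset.sum_subset Finset.inter_subset_right (fun x hx hnx => by
      by_contra hne
      exact hnx (Finset.mem_inter.mpr ⟨(h x hne).1, hx⟩))
  rw [← h1, h2]

open Classical in
lemma signfun_eq {m : ℕ} (C D : Fin m → ℤ) :
    signfun C D = (-1 : ℚ) ^ (Nat.card (SCD C D)) := by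
  rw [signfun, Finset.prod_ite (fun _ => (-1 : ℚ)) (fun _ => (1 : ℚ)),
    Finset.prod_const, Finset.prod_const, one_pow, mul_one]
  congr 1
  rw [Nat.card_eq_fintype_card]
  rw [← Set.toFinset_card]
  congr 1
  ext i
  simp [Set.mem_toFinset]

/- ## Fin helper facts -/

lemma fin_pair_cases {n : ℕ} {i j : Fin (n + 2)} (hij : (j : ℕ) = (i : ℕ) + 1) :
    (j = Fin.last (n + 1) ∧ i = (Fin.last n).castSucc) ∨
      ∃ i' j' : Fin (n + 1), i = i'.castSucc ∧ j = j'.castSucc ∧ (j' : ℕ) = (i' : ℕ) + 1 := by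
  by_cases hj : (j : ℕ) = n + 1
  · left
    constructor
    · exact Fin.ext (by simp [hj])
    · exact Fin.ext (by simp; omega)
  · right
    have hj' : (j : ℕ) < n + 1 := by have := j.isLt; omega
    have hi' : (i : ℕ) < n + 1 := by omega
    exact ⟨⟨i, hi'⟩, ⟨j, hj'⟩, Fin.ext (by simp), Fin.ext (by simp), by simp [hij]⟩

lemma fin_eq_castSucc {n : ℕ} {j : Fin (n + 1)} (h : (j : ℕ) < n) :
    ∃ j' : Fin n, j = j'.castSucc :=
  ⟨⟨j, h⟩, Fin.ext (by simp)⟩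

lemma isStart_castSucc {n : ℕ} (C : Fin (n + 1) → ℤ) (i : Fin n) :
    IsStart C i.castSucc ↔ IsStart (fun i => C i.castSucc) i := by
  constructor
  · rintro (h0 | ⟨h, hh, hlt⟩)
    · exact Or.inl (by simpa using h0)
    · have hhn : (h : ℕ) < n := by
        have := i.isLt; simp at hh; omega
      obtain ⟨h', rfl⟩ := fin_eq_castSucc hhn
      exact Or.inr ⟨h', by simpa using hh, hlt⟩
  · rintro (h0 | ⟨h, hh, hlt⟩)
    · exact Or.inl (by simpa using h0)
    · exact Or.inr ⟨h.castSucc, by simpa using hh, hlt⟩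

/- ## snoc decomposition lemmas -/

lemma inBC_snoc {n : ℕ} (C : Fin (n + 2) → ℤ) (D' : Fin (n + 1) → ℤ) (d : ℤ) :
    InBC C (Fin.snoc D' d) ↔
      InBC (fun i => C i.castSucc) D' ∧
      (IsStart C (Fin.last (n + 1)) → (d = C (Fin.last (n + 1)) ∨ d = C (Fin.last (n + 1)) - 1)) ∧
      (C ((Fin.last n).castSucc) = C (Fin.last (n + 1)) →
        (d = D' (Fin.last n) ∨ d = D' (Fin.last n) - 1)) ∧
      (C (Fin.last (n + 1)) < C ((Fin.last n).castSucc) →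
        C (Fin.last (n + 1)) < D' (Fin.last n)) := by
  have hPL : ((Fin.last (n + 1) : Fin (n + 2)) : ℕ) = (((Fin.last n).castSucc : Fin (n + 2)) : ℕ) + 1 := by
    simp
  constructor
  · intro h
    refine ⟨⟨?_, ?_, ?_⟩, ?_, ?_, ?_⟩
    · intro i' hstart
      have := h.1 i'.castSucc ((isStart_castSucc C i').mpr hstart)
      simpa using this
    · intro i' j' hij hCeq
      have := h.2.1 i'.castSucc j'.castSucc (by simpa using hij) hCeq
      simpa using this
    · intro i' j' hij hCeq
      have := h.2.2 i'.castSucc j'.castSucc (by simpa using hij) hCeq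
      simpa using this
    · intro hstart
      have := h.1 _ hstart
      simpa using this
    · intro hCeq
      have := h.2.1 _ _ hPL hCeq
      simpa using this
    · intro hlt
      have := h.2.2 _ _ hPL hlt
      simpa using this
  · rintro ⟨h', hs, hb, he⟩
    refine ⟨?_, ?_, ?_⟩
    · intro i hstart
      induction i using Fin.lastCases with
      | last => simpa using hs hstart
      | cast i' =>
        have := h'.1 i' ((isStart_castSucc C i').mp hstart)
        simpa using this
    · intro i j hij hCeq
      rcases fin_pair_cases hij with ⟨rfl, rfl⟩ | ⟨i', j', rfl, rfl, hij'⟩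
      · simpa using hb hCeq
      · have := h'.2.1 i' j' hij' hCeq
        simpa using this
    · intro i j hij hCeq
      rcases fin_pair_cases hij with ⟨rfl, rfl⟩ | ⟨i', j', rfl, rfl, hij'⟩
      · simpa using he hCeq
      · have := h'.2.2 i' j' hij' hCeq
        simpa using this

lemma leS_snoc {n : ℕ} (E : Fin (n + 2) → ℤ) (D' : Fin (n + 1) → ℤ) (d : ℤ) :
    leS E (Fin.snoc D' d) ↔
      leS (fun i => E i.castSucc) D' ∧ E (Fin.last (n + 1)) ≤ d ∧
      (d < D' (Fin.last n) → E (Fin.last (n + 1)) < E ((Fin.last n).castSucc)) := by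
  have hPL : ((Fin.last (n + 1) : Fin (n + 2)) : ℕ) = (((Fin.last n).castSucc : Fin (n + 2)) : ℕ) + 1 := by
    simp
  constructor
  · intro h
    refine ⟨⟨?_, ?_⟩, ?_, ?_⟩
    · intro i'
      have := h.1 i'.castSucc
      simpa using this
    · intro i' j' hij hlt
      exact h.2 i'.castSucc j'.castSucc (by simpa using hij) (by simpa using hlt)
    · have := h.1 (Fin.last (n + 1))
      simpa using this
    · intro hlt
      exact h.2 _ _ hPL (by simpa using hlt)
  · rintro ⟨h', hl, hstr⟩
    refine ⟨?_, ?_⟩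
    · intro i
      induction i using Fin.lastCases with
      | last => simpa using hl
      | cast i' => simpa using h'.1 i'
    · intro i j hij hlt
      rcases fin_pair_cases hij with ⟨rfl, rfl⟩ | ⟨i', j', rfl, rfl, hij'⟩
      · exact hstr (by simpa using hlt)
      · exact h'.2 i' j' hij' (by simpa using hlt)

lemma mem_SCD_castSucc {n : ℕ} (C : Fin (n + 2) → ℤ) (D' : Fin (n + 1) → ℤ) (d : ℤ)
    (i' : Fin (n + 1)) :
    i'.castSucc ∈ SCD C (Fin.snoc D' d) ↔ i' ∈ SCD (fun i => C i.castSucc) D' := by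
  constructor
  · rintro (⟨hstart, hval⟩ | ⟨h, hh, hCeq, hval⟩)
    · exact Or.inl ⟨(isStart_castSucc C i').mp hstart, by simpa using hval⟩
    · have hhn : (h : ℕ) < n + 1 := by
        have := i'.isLt; simp at hh; omega
      obtain ⟨h', rfl⟩ := fin_eq_castSucc hhn
      right
      exact ⟨h', by simpa using hh, hCeq, by simpa using hval⟩
  · rintro (⟨hstart, hval⟩ | ⟨h', hh, hCeq, hval⟩)
    · exact Or.inl ⟨(isStart_castSucc C i').mpr hstart, by simpa using hval⟩
    · right
      exact ⟨h'.castSucc, by simpa using hh, hCeq, by simpa using hval⟩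

lemma last_mem_SCD {n : ℕ} (C : Fin (n + 2) → ℤ) (D' : Fin (n + 1) → ℤ) (d : ℤ) :
    Fin.last (n + 1) ∈ SCD C (Fin.snoc D' d) ↔
      (IsStart C (Fin.last (n + 1)) ∧ d = C (Fin.last (n + 1)) - 1) ∨
      (C ((Fin.last n).castSucc) = C (Fin.last (n + 1)) ∧ d = D' (Fin.last n) - 1) := by
  constructor
  · rintro (⟨hstart, hval⟩ | ⟨h, hh, hCeq, hval⟩)
    · exact Or.inl ⟨hstart, by simpa using hval⟩
    · have : h = (Fin.last n).castSucc := Fin.ext (by simp at hh ⊢; omega)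
      subst this
      exact Or.inr ⟨hCeq, by simpa using hval⟩
  · rintro (⟨hstart, hval⟩ | ⟨hCeq, hval⟩)
    · exact Or.inl ⟨hstart, by simpa using hval⟩
    · right
      refine ⟨(Fin.last n).castSucc, by simp, hCeq, by simpa using hval⟩

open Classical in
lemma signfun_snoc {n : ℕ} (C : Fin (n + 2) → ℤ) (D' : Fin (n + 1) → ℤ) (d : ℤ) :
    signfun C (Fin.snoc D' d) = signfun (fun i => C i.castSucc) D' *
      (if Fin.last (n + 1) ∈ SCD C (Fin.snoc D' d) then (-1 : ℚ) else 1) := by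
  rw [signfun, signfun, Fin.prod_univ_castSucc]
  congr 1
  apply Finset.prod_congr rfl
  intro i' _
  have := mem_SCD_castSucc C D' d i'
  split <;> split <;> tauto

lemma not_isStart_last {n : ℕ} (C : Fin (n + 2) → ℤ)
    (h : C ((Fin.last n).castSucc) = C (Fin.last (n + 1))) :
    ¬ IsStart C (Fin.last (n + 1)) := by
  rintro (h0 | ⟨q, hq, hlt⟩)
  · simp at h0
  · have : q = (Fin.last n).castSucc := Fin.ext (by simp at hq ⊢; omega)
    subst this; omega

lemma isStart_last_of_lt {n : ℕ} (C : Fin (n + 2) → ℤ)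
    (h : C (Fin.last (n + 1)) < C ((Fin.last n).castSucc)) :
    IsStart C (Fin.last (n + 1)) :=
  Or.inr ⟨(Fin.last n).castSucc, by simp, h⟩

lemma eq_iff_parts {n : ℕ} (E C : Fin (n + 1) → ℤ) :
    E = C ↔ (fun i : Fin n => E i.castSucc) = (fun i : Fin n => C i.castSucc) ∧
      E (Fin.last n) = C (Fin.last n) := by
  constructor
  · rintro rfl; exact ⟨rfl, rfl⟩
  · rintro ⟨h1, h2⟩
    funext i
    induction i using Fin.lastCases with
    | last => exact h2
    | cast i' => exact congrFun h1 i'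

def snocEquiv (m : ℕ) : ((Fin m → ℤ) × ℤ) ≃ (Fin (m + 1) → ℤ) where
  toFun p := Fin.snoc p.1 p.2
  invFun D := (Fin.init D, D (Fin.last m))
  left_inv p := by simp
  right_inv D := Fin.snoc_init_self D

open Classical in
lemma wt_snoc_eval {n : ℕ} (C E : Fin (n + 2) → ℤ) (D' : Fin (n + 1) → ℤ) (d : ℤ)
    (hq1 : InBC (fun i => C i.castSucc) D') (hq2 : leS (fun i => E i.castSucc) D') :
    wt C E (Fin.snoc D' d) =
      if ((IsStart C (Fin.last (n + 1)) → (d = C (Fin.last (n + 1)) ∨ d = C (Fin.last (n + 1)) - 1)) ∧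
          (C ((Fin.last n).castSucc) = C (Fin.last (n + 1)) →
            (d = D' (Fin.last n) ∨ d = D' (Fin.last n) - 1)) ∧
          (C (Fin.last (n + 1)) < C ((Fin.last n).castSucc) →
            C (Fin.last (n + 1)) < D' (Fin.last n)) ∧
          E (Fin.last (n + 1)) ≤ d ∧
          (d < D' (Fin.last n) → E (Fin.last (n + 1)) < E ((Fin.last n).castSucc)))
      then signfun (fun i => C i.castSucc) D' *
        (if (IsStart C (Fin.last (n + 1)) ∧ d = C (Fin.last (n + 1)) - 1) ∨
            (C ((Fin.last n).castSucc) = C (Fin.last (n + 1)) ∧ d = D' (Fin.last n) - 1)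
         then (-1 : ℚ) else 1)
      else 0 := by
  rw [wt]
  by_cases h : InBC C (Fin.snoc D' d) ∧ leS E (Fin.snoc D' d)
  · rw [if_pos h, if_pos, signfun_snoc]
    · simp only [last_mem_SCD]
    · obtain ⟨h1, h2⟩ := h
      rw [inBC_snoc] at h1
      rw [leS_snoc] at h2
      exact ⟨h1.2.1, h1.2.2.1, h1.2.2.2, h2.2.1, h2.2.2⟩
  · rw [if_neg h, if_neg]
    intro hcond
    exact h ⟨(inBC_snoc _ _ _).mpr ⟨hq1, hcond.1, hcond.2.1, hcond.2.2.1⟩,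
      (leS_snoc _ _ _).mpr ⟨hq2, hcond.2.2.2.1, hcond.2.2.2.2⟩⟩

open Classical in
lemma key_sum : ∀ (m : ℕ) (C E : Fin m → ℤ), Antitone C → Antitone E →
    ∀ s : Finset (Fin m → ℤ), (∀ D, wt C E D ≠ 0 → D ∈ s) →
    ∑ D ∈ s, wt C E D = if E = C then 1 else 0 := by
  intro m
  induction m with
  | zero =>
    intro C E hC hE s hs
    have hD0 : ∀ D : Fin 0 → ℤ, D = (fun i => i.elim0) := fun D => funext fun i => i.elim0
    have hwt : ∀ D : Fin 0 → ℤ, wt C E D = 1 := by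
      intro D
      rw [wt, if_pos ⟨⟨fun i => i.elim0, fun i j _ => i.elim0, fun i j _ => i.elim0⟩,
        fun i => i.elim0, fun i j _ => i.elim0⟩, signfun]
      simp
    have hsingle : s = {(fun i => i.elim0 : Fin 0 → ℤ)} := by
      apply Finset.eq_singleton_iff_unique_mem.mpr
      exact ⟨hs _ (by rw [hwt]; norm_num), fun x _ => hD0 x⟩
    rw [hsingle, Finset.sum_singleton, hwt, if_pos (funext fun i => i.elim0)]
  | succ m ih =>
    rcases m with _ | k
    · -- length 1
      intro C E hC hE s hs
      have hzero : ∀ i : Fin 1, i = 0 := fun i => Subsingleton.elim i 0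
      have hnopair : ∀ i j : Fin 1, ¬((j : ℕ) = (i : ℕ) + 1) := by
        intro i j h
        have := j.isLt; have := i.isLt; omega
      have hwtA : wt C E (fun _ => C 0) = if E 0 ≤ C 0 then 1 else 0 := by
        rw [wt, signfun]
        by_cases hE0 : E 0 ≤ C 0
        · have hnm : (0 : Fin 1) ∉ SCD C (fun _ => C 0) := by
            rintro (⟨_, hv⟩ | ⟨h, hh, _⟩)
            · simp at hv; omega
            · exact hnopair h 0 hh
          rw [if_pos ⟨⟨fun i _ => Or.inl (by rw [hzero i]), fun i j hij => absurd hij (hnopair i j),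
              fun i j hij => absurd hij (hnopair i j)⟩, fun i => by rw [hzero i]; exact hE0,
              fun i j hij => absurd hij (hnopair i j)⟩, if_pos hE0, Fin.prod_univ_one,
            if_neg (by rw [hzero 0]; exact hnm)]
        · rw [if_neg, if_neg hE0]
          rintro ⟨_, hle, _⟩
          exact hE0 (hle 0)
      have hwtB : wt C E (fun _ => C 0 - 1) = if E 0 ≤ C 0 - 1 then -1 else 0 := by
        rw [wt, signfun]
        by_cases hE0 : E 0 ≤ C 0 - 1
        · have hm : (0 : Fin 1) ∈ SCD C (fun _ => C 0 - 1) := Or.inl ⟨Or.inl rfl, rfl⟩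
          rw [if_pos ⟨⟨fun i _ => Or.inr (by rw [hzero i]), fun i j hij => absurd hij (hnopair i j),
              fun i j hij => absurd hij (hnopair i j)⟩, fun i => by rw [hzero i]; exact hE0,
              fun i j hij => absurd hij (hnopair i j)⟩, if_pos hE0, Fin.prod_univ_one,
            if_pos (by rw [hzero 0]; exact hm)]
        · rw [if_neg, if_neg hE0]
          rintro ⟨_, hle, _⟩
          exact hE0 (hle 0)
      have hAB : (fun _ : Fin 1 => C 0) ≠ (fun _ : Fin 1 => C 0 - 1) := by
        intro h
        have := congrFun h 0
        omega
      have hstep : ∑ D ∈ s, wt C E D =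
          ∑ D ∈ ({(fun _ : Fin 1 => C 0), (fun _ : Fin 1 => C 0 - 1)} : Finset (Fin 1 → ℤ)), wt C E D := by
        apply sum_wt_indep
        intro D hD
        refine ⟨hs D hD, ?_⟩
        obtain ⟨hIn, _⟩ := wt_ne_zero hD
        rcases hIn.1 0 (Or.inl rfl) with h' | h' <;>
          [exact Finset.mem_insert.mpr (Or.inl (funext fun i => by rw [hzero i, h']));
           exact Finset.mem_insert.mpr (Or.inr (Finset.mem_singleton.mpr
             (funext fun i => by rw [hzero i, h'])))]
      have hEC : (E = C) ↔ E 0 = C 0 := by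
        constructor
        · intro h; rw [h]
        · intro h; funext i; rw [hzero i, h]
      rw [hstep, Finset.sum_pair hAB, hwtA, hwtB]
      by_cases h1 : E 0 ≤ C 0 <;> by_cases h2 : E 0 ≤ C 0 - 1 <;>
        by_cases h3 : E = C <;> rw [hEC] at h3 <;>
        simp [h1, h2, h3, hEC] <;> omega
    · -- length k + 2
      intro C E hC hE s hs
      have hCm : Antitone (fun i : Fin (k + 1) => C i.castSucc) :=
        hC.comp_monotone Fin.strictMono_castSucc.monotone
      have hEm : Antitone (fun i : Fin (k + 1) => E i.castSucc) :=
        hE.comp_monotone Fin.strictMono_castSucc.monotone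
      have hCPL : C (Fin.last (k + 1)) ≤ C ((Fin.last k).castSucc) :=
        hC (by rw [Fin.le_def]; simp)
      have hEPL : E (Fin.last (k + 1)) ≤ E ((Fin.last k).castSucc) :=
        hE (by rw [Fin.le_def]; simp)
      set s' : Finset (Fin (k + 1) → ℤ) :=
        Finset.Icc (fun i => C i.castSucc - ((k : ℤ) + 2)) (fun i => C i.castSucc) with hs'def
      set t : Finset ℤ :=
        Finset.Icc (C (Fin.last (k + 1)) - ((k : ℤ) + 2)) (C (Fin.last (k + 1))) with htdef
      have hmem' : ∀ D' : Fin (k + 1) → ℤ, InBC (fun i => C i.castSucc) D' → D' ∈ s' := by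
        intro D' hD'
        rw [hs'def, Finset.mem_Icc]
        constructor <;> rw [Pi.le_def] <;> intro i
        · have h1 := inBC_lower hCm hD' i
          have h2 : (i : ℕ) < k + 1 := i.isLt
          omega
        · exact inBC_le hCm hD' i
      -- step 1 : re-index the sum
      have hstep1 : ∑ D ∈ s, wt C E D =
          ∑ D ∈ (s' ×ˢ t).map (snocEquiv (k + 1)).toEmbedding, wt C E D := by
        apply sum_wt_indep
        intro D hD
        refine ⟨hs D hD, ?_⟩
        obtain ⟨hIn, hle⟩ := wt_ne_zero hD
        rw [Finset.mem_map]
        refine ⟨(Fin.init D, D (Fin.last (k + 1))), ?_, ?_⟩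
        · rw [Finset.mem_product]
          constructor
          · apply hmem'
            rw [← Fin.snoc_init_self D] at hIn
            exact ((inBC_snoc C (Fin.init D) (D (Fin.last (k + 1)))).mp hIn).1
          · rw [htdef, Finset.mem_Icc]
            have h1 := inBC_le hC hIn (Fin.last (k + 1))
            have h2 := inBC_lower hC hIn (Fin.last (k + 1))
            have h3 : ((Fin.last (k + 1) : Fin (k + 2)) : ℕ) = k + 1 := by simp
            rw [h3] at h2
            push_cast at h2
            constructor <;> omega
        · exact Fin.snoc_init_self D
      rw [hstep1, Finset.sum_map]
      simp only [Equiv.coe_toEmbedding]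
      have hsnocfun : ∀ p : (Fin (k + 1) → ℤ) × ℤ, (snocEquiv (k + 1)) p = Fin.snoc p.1 p.2 :=
        fun p => rfl
      rw [Finset.sum_product]
      simp only [hsnocfun]
      rcases lt_or_eq_of_le hCPL with hbr | hbr
      · -- new block case : C L < C P
        have hstart : IsStart C (Fin.last (k + 1)) := isStart_last_of_lt C hbr
        have hne : ¬ (C ((Fin.last k).castSucc) = C (Fin.last (k + 1))) := by omega
        have hinner : ∀ D' : Fin (k + 1) → ℤ, (∑ d ∈ t, wt C E (Fin.snoc D' d)) =
            (if E (Fin.last (k + 1)) = C (Fin.last (k + 1)) ∧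
                E (Fin.last (k + 1)) < E ((Fin.last k).castSucc) then (1 : ℚ) else 0) *
              wt (fun i => C i.castSucc) (fun i => E i.castSucc) D' := by
          intro D'
          by_cases hq : InBC (fun i => C i.castSucc) D' ∧ leS (fun i => E i.castSucc) D'
          · obtain ⟨hq1, hq2⟩ := hq
            have hwt' : wt (fun i => C i.castSucc) (fun i => E i.castSucc) D' =
                signfun (fun i => C i.castSucc) D' := by rw [wt, if_pos ⟨hq1, hq2⟩]
            have hEp : E ((Fin.last k).castSucc) ≤ D' (Fin.last k) := hq2.1 (Fin.last k)
            have hval : ∀ d, wt C E (Fin.snoc D' d) =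
                (if d = C (Fin.last (k + 1)) then
                  (if C (Fin.last (k + 1)) < D' (Fin.last k) ∧
                      E (Fin.last (k + 1)) ≤ C (Fin.last (k + 1)) ∧
                      E (Fin.last (k + 1)) < E ((Fin.last k).castSucc)
                   then signfun (fun i => C i.castSucc) D' else 0) else 0) +
                (if d = C (Fin.last (k + 1)) - 1 then
                  (if C (Fin.last (k + 1)) < D' (Fin.last k) ∧
                      E (Fin.last (k + 1)) ≤ C (Fin.last (k + 1)) - 1 ∧
                      E (Fin.last (k + 1)) < E ((Fin.last k).castSucc)
                   then -(signfun (fun i => C i.castSucc) D') else 0) else 0) := by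
              intro d
              rw [wt_snoc_eval C E D' d hq1 hq2]
              by_cases hd1 : d = C (Fin.last (k + 1))
              · subst hd1
                have hSGN : ¬ ((IsStart C (Fin.last (k + 1)) ∧
                    C (Fin.last (k + 1)) = C (Fin.last (k + 1)) - 1) ∨
                    (C ((Fin.last k).castSucc) = C (Fin.last (k + 1)) ∧
                      C (Fin.last (k + 1)) = D' (Fin.last k) - 1)) := by
                  rintro (⟨_, hv⟩ | ⟨hv, _⟩) <;> omega
                rw [if_pos rfl,
                  if_neg (by omega : ¬ C (Fin.last (k + 1)) = C (Fin.last (k + 1)) - 1),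
                  add_zero, if_neg hSGN, mul_one]
                apply if_congr _ rfl rfl
                constructor
                · rintro ⟨_, _, h3, h4, h5⟩
                  exact ⟨h3 hbr, h4, h5 (h3 hbr)⟩
                · rintro ⟨a1, a2, a3⟩
                  exact ⟨fun _ => Or.inl rfl, fun hc => absurd hc hne, fun _ => a1, a2,
                    fun _ => a3⟩
              · by_cases hd2 : d = C (Fin.last (k + 1)) - 1
                · subst hd2
                  rw [if_neg hd1, zero_add, if_pos rfl,
                    if_pos (Or.inl ⟨hstart, rfl⟩ : (IsStart C (Fin.last (k + 1)) ∧
                      C (Fin.last (k + 1)) - 1 = C (Fin.last (k + 1)) - 1) ∨ _), mul_neg_one]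
                  apply if_congr _ rfl rfl
                  constructor
                  · rintro ⟨_, _, h3, h4, h5⟩
                    exact ⟨h3 hbr, h4, h5 (by have := h3 hbr; omega)⟩
                  · rintro ⟨b1, b2, b3⟩
                    exact ⟨fun _ => Or.inr rfl, fun hc => absurd hc hne, fun _ => b1, b2,
                      fun _ => b3⟩
                · rw [if_neg hd1, if_neg hd2, add_zero, if_neg]
                  rintro ⟨h1, -, -, -, -⟩
                  rcases h1 hstart with hv | hv
                  · exact hd1 hv
                  · exact hd2 hv
            have hmem1 : C (Fin.last (k + 1)) ∈ t := by
              rw [htdef, Finset.mem_Icc]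
              constructor <;> omega
            have hmem2 : C (Fin.last (k + 1)) - 1 ∈ t := by
              rw [htdef, Finset.mem_Icc]
              constructor <;> omega
            rw [Finset.sum_congr rfl (fun d _ => hval d), Finset.sum_add_distrib,
              Finset.sum_ite_eq' t (C (Fin.last (k + 1))) _,
              Finset.sum_ite_eq' t (C (Fin.last (k + 1)) - 1) _,
              if_pos hmem1, if_pos hmem2, hwt']
            split_ifs <;> first | ring1 | (exfalso; omega)
          · have hz : ∀ d ∈ t, wt C E (Fin.snoc D' d) = 0 := by
              intro d _
              rw [wt, if_neg]
              rintro ⟨hIn, hle⟩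
              exact hq ⟨((inBC_snoc C D' d).mp hIn).1, ((leS_snoc E D' d).mp hle).1⟩
            rw [Finset.sum_eq_zero hz, wt, if_neg hq, mul_zero]
        rw [Finset.sum_congr rfl (fun D' _ => hinner D'), ← Finset.mul_sum,
          ih (fun i => C i.castSucc) (fun i => E i.castSucc) hCm hEm s'
            (fun D' hD' => hmem' D' (wt_ne_zero hD').1)]
        by_cases h2 : (fun i : Fin (k + 1) => E i.castSucc) = (fun i : Fin (k + 1) => C i.castSucc)
        · have hEPCP : E ((Fin.last k).castSucc) = C ((Fin.last k).castSucc) :=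
            congrFun h2 (Fin.last k)
          rw [if_pos h2]
          by_cases h1 : E (Fin.last (k + 1)) = C (Fin.last (k + 1))
          · rw [if_pos ⟨h1, by omega⟩, if_pos ((eq_iff_parts E C).mpr ⟨h2, h1⟩)]
            ring
          · rw [if_neg (fun hc => h1 hc.1), if_neg (fun hc => h1 ((eq_iff_parts E C).mp hc).2)]
            ring
        · rw [if_neg h2, if_neg (fun hc => h2 ((eq_iff_parts E C).mp hc).1), mul_zero]
      · -- same block case : C L = C P
        have hnotstart : ¬ IsStart C (Fin.last (k + 1)) := not_isStart_last C hbr.symm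
        have hinner : ∀ D' : Fin (k + 1) → ℤ, (∑ d ∈ t, wt C E (Fin.snoc D' d)) =
            (if E ((Fin.last k).castSucc) = E (Fin.last (k + 1)) then (1 : ℚ) else 0) *
              wt (fun i => C i.castSucc) (fun i => E i.castSucc) D' := by
          intro D'
          by_cases hq : InBC (fun i => C i.castSucc) D' ∧ leS (fun i => E i.castSucc) D'
          · obtain ⟨hq1, hq2⟩ := hq
            have hwt' : wt (fun i => C i.castSucc) (fun i => E i.castSucc) D' =
                signfun (fun i => C i.castSucc) D' := by rw [wt, if_pos ⟨hq1, hq2⟩]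
            have hEp : E ((Fin.last k).castSucc) ≤ D' (Fin.last k) := hq2.1 (Fin.last k)
            have hple : D' (Fin.last k) ≤ C ((Fin.last k).castSucc) :=
              inBC_le hCm hq1 (Fin.last k)
            have hplow : C ((Fin.last k).castSucc) - ((k : ℤ) + 1) ≤ D' (Fin.last k) := by
              have := inBC_lower hCm hq1 (Fin.last k)
              simp only [Fin.val_last] at this
              push_cast at this
              exact this
            have hval : ∀ d, wt C E (Fin.snoc D' d) =
                (if d = D' (Fin.last k) then
                  (if E (Fin.last (k + 1)) ≤ D' (Fin.last k)
                   then signfun (fun i => C i.castSucc) D' else 0) else 0) +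
                (if d = D' (Fin.last k) - 1 then
                  (if E (Fin.last (k + 1)) ≤ D' (Fin.last k) - 1 ∧
                      E (Fin.last (k + 1)) < E ((Fin.last k).castSucc)
                   then -(signfun (fun i => C i.castSucc) D') else 0) else 0) := by
              intro d
              rw [wt_snoc_eval C E D' d hq1 hq2]
              by_cases hd1 : d = D' (Fin.last k)
              · subst hd1
                have hSGN : ¬ ((IsStart C (Fin.last (k + 1)) ∧
                    D' (Fin.last k) = C (Fin.last (k + 1)) - 1) ∨
                    (C ((Fin.last k).castSucc) = C (Fin.last (k + 1)) ∧
                      D' (Fin.last k) = D' (Fin.last k) - 1)) := by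
                  rintro (⟨hSt, _⟩ | ⟨_, hv⟩)
                  · exact hnotstart hSt
                  · omega
                rw [if_pos rfl,
                  if_neg (by omega : ¬ D' (Fin.last k) = D' (Fin.last k) - 1),
                  add_zero, if_neg hSGN, mul_one]
                apply if_congr _ rfl rfl
                constructor
                · rintro ⟨-, -, -, h4, -⟩
                  exact h4
                · intro h4
                  exact ⟨fun hSt => absurd hSt hnotstart, fun _ => Or.inl rfl,
                    fun hc => absurd hc (by omega), h4, fun hc => absurd hc (lt_irrefl _)⟩
              · by_cases hd2 : d = D' (Fin.last k) - 1
                · subst hd2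
                  rw [if_neg hd1, zero_add, if_pos rfl,
                    if_pos (Or.inr ⟨hbr.symm, rfl⟩ : _ ∨ (C ((Fin.last k).castSucc) = C (Fin.last (k + 1)) ∧
                      D' (Fin.last k) - 1 = D' (Fin.last k) - 1)), mul_neg_one]
                  apply if_congr _ rfl rfl
                  constructor
                  · rintro ⟨-, -, -, h4, h5⟩
                    exact ⟨h4, h5 (by omega)⟩
                  · rintro ⟨b1, b2⟩
                    exact ⟨fun hSt => absurd hSt hnotstart, fun _ => Or.inr rfl,
                      fun hc => absurd hc (by omega), b1, fun _ => b2⟩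
                · rw [if_neg hd1, if_neg hd2, add_zero, if_neg]
                  rintro ⟨-, h2', -, -, -⟩
                  rcases h2' hbr.symm with hv | hv
                  · exact hd1 hv
                  · exact hd2 hv
            have hmem1 : D' (Fin.last k) ∈ t := by
              rw [htdef, Finset.mem_Icc]
              constructor <;> omega
            have hmem2 : D' (Fin.last k) - 1 ∈ t := by
              rw [htdef, Finset.mem_Icc]
              constructor <;> omega
            rw [Finset.sum_congr rfl (fun d _ => hval d), Finset.sum_add_distrib,
              Finset.sum_ite_eq' t (D' (Fin.last k)) _,
              Finset.sum_ite_eq' t (D' (Fin.last k) - 1) _,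
              if_pos hmem1, if_pos hmem2, hwt']
            split_ifs <;> first | ring1 | (exfalso; omega)
          · have hz : ∀ d ∈ t, wt C E (Fin.snoc D' d) = 0 := by
              intro d _
              rw [wt, if_neg]
              rintro ⟨hIn, hle⟩
              exact hq ⟨((inBC_snoc C D' d).mp hIn).1, ((leS_snoc E D' d).mp hle).1⟩
            rw [Finset.sum_eq_zero hz, wt, if_neg hq, mul_zero]
        rw [Finset.sum_congr rfl (fun D' _ => hinner D'), ← Finset.mul_sum,
          ih (fun i => C i.castSucc) (fun i => E i.castSucc) hCm hEm s'
            (fun D' hD' => hmem' D' (wt_ne_zero hD').1)]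
        by_cases h2 : (fun i : Fin (k + 1) => E i.castSucc) = (fun i : Fin (k + 1) => C i.castSucc)
        · have hEPCP : E ((Fin.last k).castSucc) = C ((Fin.last k).castSucc) :=
            congrFun h2 (Fin.last k)
          rw [if_pos h2]
          by_cases hEE : E ((Fin.last k).castSucc) = E (Fin.last (k + 1))
          · rw [if_pos hEE, if_pos ((eq_iff_parts E C).mpr ⟨h2, by omega⟩)]
            ring
          · rw [if_neg hEE, if_neg (fun hc => hEE (by have := ((eq_iff_parts E C).mp hc).2; omega))]
            ring
        · rw [if_neg h2, if_neg (fun hc => h2 ((eq_iff_parts E C).mp hc).1), mul_zero]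

lemma setS_finite {m : ℕ} (C : Fin m → ℤ) (hC : Antitone C) :
    {D : Fin m → ℤ | Antitone D ∧ InBC C D}.Finite := by
  apply Set.Finite.subset
    (Set.Finite.pi (fun i : Fin m => Set.finite_Icc (C i - ((i : ℕ) + 1)) (C i)))
  intro D hD
  rw [Set.mem_pi]
  intro i _
  exact ⟨inBC_lower hC hD.2 i, inBC_le hC hD.2 i⟩

lemma mem_support_expF {m : ℕ} (E : Fin m → ℤ) (i : Fin m) :
    E i ∈ (∑ j, Finsupp.single (E j) 1 : ℤ →₀ ℕ).support := by
  rw [Finsupp.mem_support_iff, Finsupp.finset_sum_apply]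
  intro hzero
  rw [Finset.sum_eq_zero_iff] at hzero
  have := hzero i (Finset.mem_univ i)
  rw [Finsupp.single_eq_same] at this
  exact one_ne_zero this


/-- **Signed multiplicity-free expansion of a monomial into back stable slides**:
for every weakly decreasing integer sequence `C = (C₁,…,C_m)`,
`x_{C₁}⋯x_{C_m} = ∑_{D ∈ 𝔹_C} (−1)^{|S_C(D)|} · 𝔉⃖(D)` (the set `𝔹_C` is finite, so
the sum is finite). -/
theorem monomial_into_backSlides (m : ℕ) (hm : 1 ≤ m) (C : Fin m → ℤ) (hC : Antitone C) :
    (MvPowerSeries.monomial (∑ i, Finsupp.single (C i) 1) 1 : MvPowerSeries ℤ ℚ) =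
      ∑ᶠ D ∈ {D : Fin m → ℤ | Antitone D ∧ InBC C D},
        ((-1 : ℚ) ^ (Nat.card (SCD C D))) • backSlideSeq D := by
  classical
  have hSfin := setS_finite C hC
  rw [finsum_mem_eq_finite_toFinset_sum _ hSfin]
  apply MvPowerSeries.ext
  intro mm
  rw [MvPowerSeries.coeff_monomial, map_sum]
  symm
  set Efin : Finset (Fin m → ℤ) := Fintype.piFinset (fun _ : Fin m => mm.support) with hEfin
  have step1 : ∀ D : Fin m → ℤ,
      (MvPowerSeries.coeff mm) (((-1 : ℚ) ^ (Nat.card (SCD C D))) • backSlideSeq D) =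
      ∑ E ∈ Efin,
        (if (Antitone E ∧ (∀ i, E i ≤ D i) ∧
            (∀ i j : Fin m, (j : ℕ) = (i : ℕ) + 1 → D j < D i → E j < E i) ∧
            (∑ i, Finsupp.single (E i) 1) = mm) then signfun C D else 0) := by
    intro D
    rw [map_smul, smul_eq_mul, ← signfun_eq]
    have h1 : (MvPowerSeries.coeff mm) (backSlideSeq D) =
        ((Nat.card {E : Fin m → ℤ // Antitone E ∧ (∀ i, E i ≤ D i) ∧
          (∀ i j : Fin m, (j : ℕ) = (i : ℕ) + 1 → D j < D i → E j < E i) ∧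
          (∑ i, Finsupp.single (E i) 1) = mm}) : ℚ) := by
      rw [MvPowerSeries.coeff_apply]
      rfl
    have h2 : {E : Fin m → ℤ | Antitone E ∧ (∀ i, E i ≤ D i) ∧
        (∀ i j : Fin m, (j : ℕ) = (i : ℕ) + 1 → D j < D i → E j < E i) ∧
        (∑ i, Finsupp.single (E i) 1) = mm} =
        ↑(Efin.filter (fun E => Antitone E ∧ (∀ i, E i ≤ D i) ∧
          (∀ i j : Fin m, (j : ℕ) = (i : ℕ) + 1 → D j < D i → E j < E i) ∧
          (∑ i, Finsupp.single (E i) 1) = mm)) := by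
      ext E
      simp only [Set.mem_setOf_eq, Finset.coe_filter, hEfin, Fintype.mem_piFinset]
      constructor
      · intro h
        refine ⟨fun i => ?_, h⟩
        rw [← h.2.2.2]
        exact mem_support_expF E i
      · exact fun h => h.2
    have h3 : (Nat.card {E : Fin m → ℤ // Antitone E ∧ (∀ i, E i ≤ D i) ∧
        (∀ i j : Fin m, (j : ℕ) = (i : ℕ) + 1 → D j < D i → E j < E i) ∧
        (∑ i, Finsupp.single (E i) 1) = mm}) =
        (Efin.filter (fun E => Antitone E ∧ (∀ i, E i ≤ D i) ∧
          (∀ i j : Fin m, (j : ℕ) = (i : ℕ) + 1 → D j < D i → E j < E i) ∧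
          (∑ i, Finsupp.single (E i) 1) = mm)).card := by
      rw [← Set.ncard_coe_finset, ← h2, ← Nat.card_coe_set_eq]
      rfl
    rw [h1, h3, Finset.card_filter, Nat.cast_sum, Finset.mul_sum]
    apply Finset.sum_congr rfl
    intro E _
    split_ifs
    · rw [Nat.cast_one, mul_one]
    · rw [Nat.cast_zero, mul_zero]
  rw [Finset.sum_congr rfl (fun D _ => step1 D), Finset.sum_comm]
  have step2 : ∀ E ∈ Efin, (∑ D ∈ hSfin.toFinset,
      (if (Antitone E ∧ (∀ i, E i ≤ D i) ∧
          (∀ i j : Fin m, (j : ℕ) = (i : ℕ) + 1 → D j < D i → E j < E i) ∧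
          (∑ i, Finsupp.single (E i) 1) = mm) then signfun C D else 0)) =
      (if (Antitone E ∧ (∑ i, Finsupp.single (E i) 1) = mm ∧ E = C) then (1 : ℚ) else 0) := by
    intro E _
    by_cases hA : Antitone E ∧ (∑ i, Finsupp.single (E i) 1) = mm
    · have hconv : ∀ D ∈ hSfin.toFinset,
          (if (Antitone E ∧ (∀ i, E i ≤ D i) ∧
              (∀ i j : Fin m, (j : ℕ) = (i : ℕ) + 1 → D j < D i → E j < E i) ∧
              (∑ i, Finsupp.single (E i) 1) = mm) then signfun C D else 0) = wt C E D := by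
        intro D hD
        rw [Set.Finite.mem_toFinset] at hD
        rw [wt]
        apply if_congr _ rfl rfl
        constructor
        · intro h
          exact ⟨hD.2, h.2.1, h.2.2.1⟩
        · intro h
          exact ⟨hA.1, h.2.1, h.2.2, hA.2⟩
      rw [Finset.sum_congr rfl hconv,
        key_sum m C E hC hA.1 hSfin.toFinset (fun D hD => by
          rw [Set.Finite.mem_toFinset]
          obtain ⟨hIn, hle⟩ := wt_ne_zero hD
          exact ⟨inBC_antitone hC hIn, hIn⟩)]
      by_cases hEC : E = C
      · rw [if_pos hEC, if_pos ⟨hA.1, hA.2, hEC⟩]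
      · rw [if_neg hEC, if_neg (fun hc => hEC hc.2.2)]
    · rw [Finset.sum_eq_zero, if_neg (fun hc => hA ⟨hc.1, hc.2.1⟩)]
      intro D _
      rw [if_neg (fun hc => hA ⟨hc.1, hc.2.2.2⟩)]
  rw [Finset.sum_congr rfl step2]
  rw [Finset.sum_eq_single C (fun E _ hEC => by rw [if_neg (fun hc => hEC hc.2.2)])
    (fun hCE => by
      rw [if_neg]
      rintro ⟨-, hexp, -⟩
      apply hCE
      rw [hEfin, Fintype.mem_piFinset]
      intro i
      rw [← hexp]
      exact mem_support_expF C i)]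
  by_cases hmm : (∑ i, Finsupp.single (C i) 1 : ℤ →₀ ℕ) = mm
  · rw [if_pos ⟨hC, hmm, rfl⟩, if_pos hmm.symm]
  · rw [if_neg (fun hc => hmm hc.2.1), if_neg (fun hc => hmm hc.symm)]
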